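/- Let ν be a probability measure on [0,1]² with both marginals uniform, and let ((U_k, V_k))_{k ≥ 1} be i.i.d. with law ν. Let ⊲ and ⊲′ be the orders on ℕ induced by (U_k) and (V_k) respectively, and let ν̂(⊲, ·) be a regular conditional probability for ⊲′ given ⊲. Then for every bijection r : ℕ → ℕ and every measurable set A of orders, ν̂(r̂(⊲), r̂(A)) = ν̂(⊲, A) for λ-almost all ⊲. -/

import Mathlib

open MeasureTheory ProbabilityTheory

/-- The relabelling map on orders (as `Bool`-valued relations on the labels) induced by a
bijection `r` of the labels: `k ⊲̂ k'` iff `r k ⊲ r k'`. -/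
def relabel (r : ℕ ≃ ℕ) (R : ℕ → ℕ → Bool) : ℕ → ℕ → Bool :=
  fun k k' => R (r k) (r k')

lemma measurable_relabel (r : ℕ ≃ ℕ) : Measurable (relabel r) :=
  measurable_pi_lambda _ fun k => measurable_pi_lambda _ fun k' =>
    (measurable_pi_apply (r k')).comp (measurable_pi_apply (r k))

lemma relabel_symm_relabel (r : ℕ ≃ ℕ) (R : ℕ → ℕ → Bool) :
    relabel r.symm (relabel r R) = R := by
  funext k k'; simp [relabel]

lemma relabel_relabel_symm (r : ℕ ≃ ℕ) (R : ℕ → ℕ → Bool) :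
    relabel r (relabel r.symm R) = R := by
  funext k k'; simp [relabel]

/-- The pair of orders induced by a sequence in `ℝ × ℝ`. -/
noncomputable def orderPair (x : ℕ → ℝ × ℝ) : (ℕ → ℕ → Bool) × (ℕ → ℕ → Bool) :=
  (fun k k' => decide ((x k).1 < (x k').1), fun k k' => decide ((x k).2 < (x k').2))

lemma measurable_decide_lt {α : Type*} [MeasurableSpace α] {f g : α → ℝ}
    (hf : Measurable f) (hg : Measurable g) :
    Measurable (fun a => decide (f a < g a)) := by
  have : (fun a => decide (f a < g a)) = fun a => if f a < g a then true else false := by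
    funext a; by_cases h : f a < g a <;> simp [h]
  rw [this]
  exact Measurable.ite (measurableSet_lt hf hg) measurable_const measurable_const

lemma measurable_orderPair : Measurable orderPair := by
  refine Measurable.prod ?_ ?_ <;>
    exact measurable_pi_lambda _ fun k => measurable_pi_lambda _ fun k' =>
      measurable_decide_lt (by fun_prop) (by fun_prop)

section aux

variable {Ω : Type*} [MeasurableSpace Ω] (P : Measure Ω) [IsProbabilityMeasure P]
  (ν : Measure (ℝ × ℝ)) [IsProbabilityMeasure ν]
  (UV : ℕ → Ω → ℝ × ℝ) (hmeas : ∀ k, Measurable (UV k))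
  (hindep : iIndepFun UV P)
  (hlaw : ∀ k, P.map (UV k) = ν)

include hmeas hindep hlaw in
/-- The law of any finite subfamily of an i.i.d. family is the product measure. -/
lemma map_tuple_eq_pi {ι : Type*} [Fintype ι] (σ : ι → ℕ) (hσ : Function.Injective σ) :
    P.map (fun ω (i : ι) => UV (σ i) ω) = Measure.pi (fun _ : ι => ν) := by
  classical
  refine (Measure.pi_eq fun B hB => ?_).symm
  have hmt : Measurable (fun ω (i : ι) => UV (σ i) ω) :=
    measurable_pi_lambda _ fun i => hmeas (σ i)
  rw [Measure.map_apply hmt (MeasurableSet.univ_pi hB)]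
  have hpre : (fun ω (i : ι) => UV (σ i) ω) ⁻¹' Set.pi Set.univ B
      = ⋂ i, UV (σ i) ⁻¹' B i := by
    ext ω; simp [Set.mem_pi]
  rw [hpre]
  set sets : ℕ → Set (ℝ × ℝ) :=
    fun n => if h : ∃ i, σ i = n then B h.choose else Set.univ with hsets
  have hsetsσ : ∀ i, sets (σ i) = B i := by
    intro i
    have h : ∃ j, σ j = σ i := ⟨i, rfl⟩
    simp only [hsets, dif_pos h]
    rw [hσ h.choose_spec]
  have hsetsm : ∀ n, MeasurableSet (sets n) := by
    intro n
    by_cases h : ∃ i, σ i = n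
    · simp only [hsets, dif_pos h]; exact hB _
    · simp only [hsets, dif_neg h]; exact MeasurableSet.univ
  have hS : (⋂ i, UV (σ i) ⁻¹' B i)
      = ⋂ n ∈ Finset.image σ Finset.univ, UV n ⁻¹' sets n := by
    ext ω
    simp only [Set.mem_iInter, Finset.mem_image, Finset.mem_univ, true_and, Set.mem_preimage]
    constructor
    · rintro h n ⟨i, rfl⟩; rw [hsetsσ]; exact h i
    · intro h i; have := h (σ i) ⟨i, rfl⟩; rwa [hsetsσ] at this
  rw [hS, hindep.measure_inter_preimage_eq_mul _ (fun n _ => hsetsm n),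
    Finset.prod_image (fun i _ j _ h => hσ h)]
  refine Finset.prod_congr rfl fun i _ => ?_
  rw [hsetsσ, ← hlaw (σ i), Measure.map_apply (hmeas (σ i)) (hB i)]

include hmeas hindep hlaw in
/-- The law of an i.i.d. sequence is invariant under relabelling of the indices. -/
lemma map_seq_perm (r : ℕ ≃ ℕ) :
    P.map (fun ω (k : ℕ) => UV (r k) ω) = P.map (fun ω (k : ℕ) => UV k ω) := by
  have h1 : Measurable (fun ω (k : ℕ) => UV (r k) ω) :=
    measurable_pi_lambda _ fun k => hmeas _
  have h2 : Measurable (fun ω (k : ℕ) => UV k ω) :=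
    measurable_pi_lambda _ fun k => hmeas _
  haveI i1 : IsProbabilityMeasure (P.map (fun ω (k : ℕ) => UV (r k) ω)) :=
    Measure.isProbabilityMeasure_map h1.aemeasurable
  haveI i2 : IsProbabilityMeasure (P.map (fun ω (k : ℕ) => UV k ω)) :=
    Measure.isProbabilityMeasure_map h2.aemeasurable
  refine ext_of_generate_finite (measurableCylinders (fun _ : ℕ => ℝ × ℝ))
    generateFrom_measurableCylinders.symm isPiSystem_measurableCylinders
    (fun t ht => ?_) (by simp)
  obtain ⟨s, S, hSm, rfl⟩ := (mem_measurableCylinders (α := fun _ : ℕ => ℝ × ℝ) t).mp ht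
  have hcyl : MeasurableSet (cylinder s S) := MeasurableSet.cylinder (α := fun _ : ℕ => ℝ × ℝ) s hSm
  rw [Measure.map_apply h1 hcyl, Measure.map_apply h2 hcyl]
  have e1 : (fun ω (k : ℕ) => UV (r k) ω) ⁻¹' cylinder s S
      = (fun ω (i : s) => UV ((fun j : s => r j) i) ω) ⁻¹' S := by
    ext ω; simp only [Set.mem_preimage, mem_cylinder]; rfl
  have e2 : (fun ω (k : ℕ) => UV k ω) ⁻¹' cylinder s S
      = (fun ω (i : s) => UV ((fun j : s => (j : ℕ)) i) ω) ⁻¹' S := by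
    ext ω; simp only [Set.mem_preimage, mem_cylinder]; rfl
  have m1 : Measurable (fun ω (i : s) => UV ((fun j : s => r j) i) ω) :=
    measurable_pi_lambda _ fun i => hmeas _
  have m2 : Measurable (fun ω (i : s) => UV ((fun j : s => (j : ℕ)) i) ω) :=
    measurable_pi_lambda _ fun i => hmeas _
  rw [e1, e2, ← Measure.map_apply m1 hSm, ← Measure.map_apply m2 hSm,
    map_tuple_eq_pi P ν UV hmeas hindep hlaw (fun j : s => r j)
      (fun a b h => Subtype.ext (r.injective h)),
    map_tuple_eq_pi P ν UV hmeas hindep hlaw (fun j : s => (j : ℕ))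
      (fun a b h => Subtype.ext h)]

end aux

/-- Let `ν` be a probability measure on `[0,1]²` with uniform marginals and `((U_k, V_k))_k`
i.i.d. with law `ν`.  Let `⊲`, `⊲′` be the orders induced by `(U_k)` and `(V_k)` and let
`ν̂(⊲, ·)` be a regular conditional probability for `⊲′` given `⊲`.  Then for every bijection
`r` of the labels and every measurable set `A` of orders,
`ν̂(r̂(⊲), r̂(A)) = ν̂(⊲, A)` for `λ`-almost all `⊲` (`λ` being the law of `⊲`). -/
theorem rcp_commutes_with_relabelling
    {Ω : Type*} [MeasurableSpace Ω] (P : Measure Ω) [IsProbabilityMeasure P]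
    (ν : Measure (ℝ × ℝ)) (hν : IsProbabilityMeasure ν)
    (hfst : ν.map Prod.fst = volume.restrict (Set.Icc (0:ℝ) 1))
    (hsnd : ν.map Prod.snd = volume.restrict (Set.Icc (0:ℝ) 1))
    (UV : ℕ → Ω → ℝ × ℝ) (hmeas : ∀ k, Measurable (UV k))
    (hindep : iIndepFun UV P)
    (hlaw : ∀ k, P.map (UV k) = ν)
    (T T' : Ω → ℕ → ℕ → Bool)
    (hT : ∀ ω k k', T ω k k' = decide ((UV k ω).1 < (UV k' ω).1))
    (hT' : ∀ ω k k', T' ω k k' = decide ((UV k ω).2 < (UV k' ω).2))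
    (κ : Kernel (ℕ → ℕ → Bool) (ℕ → ℕ → Bool)) [IsMarkovKernel κ]
    (hκ : P.map (fun ω => (T ω, T' ω)) = (P.map T) ⊗ₘ κ) :
    ∀ (r : ℕ ≃ ℕ) (A : Set (ℕ → ℕ → Bool)), MeasurableSet A →
      ∀ᵐ R ∂(P.map T), κ (relabel r R) (relabel r '' A) = κ R A := by
  haveI := hν
  intro r A hA
  classical
  -- basic measurability
  have hseq : ∀ q : ℕ ≃ ℕ, Measurable (fun ω (k : ℕ) => UV (q k) ω) :=
    fun q => measurable_pi_lambda _ fun k => hmeas _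
  have hseq0 : Measurable (fun ω (k : ℕ) => UV k ω) :=
    measurable_pi_lambda _ fun k => hmeas _
  -- the pair `(T, T')` is `orderPair` of the sequence
  have hpair_eq : (fun ω => (T ω, T' ω)) = orderPair ∘ (fun ω (k : ℕ) => UV k ω) := by
    funext ω
    refine Prod.ext ?_ ?_ <;> · funext k k'; simp [orderPair, hT, hT']
  -- the relabelled pair is `orderPair` of the relabelled sequence
  have hpair_eq' : ∀ q : ℕ ≃ ℕ,
      (fun ω => (relabel q (T ω), relabel q (T' ω)))
        = orderPair ∘ (fun ω (k : ℕ) => UV (q k) ω) := by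
    intro q; funext ω
    refine Prod.ext ?_ ?_ <;> · funext k k'; simp [orderPair, relabel, hT, hT']
  have hpairm : Measurable (fun ω => (T ω, T' ω)) := by
    rw [hpair_eq]; exact measurable_orderPair.comp hseq0
  have hTm : Measurable T := by
    have : T = Prod.fst ∘ (fun ω => (T ω, T' ω)) := rfl
    rw [this]; exact measurable_fst.comp hpairm
  -- invariance of the joint law under relabelling
  have key : ∀ q : ℕ ≃ ℕ,
      P.map (fun ω => (relabel q (T ω), relabel q (T' ω)))
        = P.map (fun ω => (T ω, T' ω)) := by
    intro q
    rw [hpair_eq, hpair_eq' q, ← Measure.map_map measurable_orderPair (hseq q),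
      ← Measure.map_map measurable_orderPair hseq0,
      map_seq_perm P ν UV hmeas hindep hlaw q]
  set μ := P.map T with hμdef
  set ρ := P.map (fun ω => (T ω, T' ω)) with hρdef
  haveI : IsProbabilityMeasure μ := Measure.isProbabilityMeasure_map hTm.aemeasurable
  haveI : IsProbabilityMeasure ρ := Measure.isProbabilityMeasure_map hpairm.aemeasurable
  have hρ : ρ = μ ⊗ₘ κ := hκ
  have hρfst : ρ.fst = μ := by rw [hρ, Measure.fst_compProd]
  have hT'm : Measurable T' := by
    have : T' = Prod.snd ∘ (fun ω => (T ω, T' ω)) := rfl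
    rw [this]; exact measurable_snd.comp hpairm
  -- invariance of `μ` under relabelling
  have hμinv : ∀ q : ℕ ≃ ℕ, μ.map (relabel q) = μ := by
    intro q
    calc μ.map (relabel q) = P.map (relabel q ∘ T) :=
          Measure.map_map (measurable_relabel q) hTm
      _ = (P.map (fun ω => (relabel q (T ω), relabel q (T' ω)))).fst :=
          (Measure.fst_map_prodMk ((measurable_relabel q).comp hT'm)).symm
      _ = ρ.fst := by rw [key q]
      _ = μ := hρfst
  set f := relabel r with hfdef
  set g := relabel r.symm with hgdef
  have hf : Measurable f := measurable_relabel r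
  have hg : Measurable g := measurable_relabel r.symm
  have hgf : ∀ R, g (f R) = R := relabel_symm_relabel r
  have hfg : ∀ R, f (g R) = R := relabel_relabel_symm r
  -- the modified kernel
  set κ' : Kernel (ℕ → ℕ → Bool) (ℕ → ℕ → Bool) := Kernel.map (κ.comap f hf) g with hκ'def
  haveI : IsMarkovKernel κ' := Kernel.IsMarkovKernel.map _ hg
  have hκ'app : ∀ x (B : Set (ℕ → ℕ → Bool)), MeasurableSet B →
      κ' x B = κ (f x) (g ⁻¹' B) := by
    intro x B hB
    rw [hκ'def, Kernel.map_apply' _ hg _ hB, Kernel.comap_apply]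
  -- `ρ` is invariant under the pair relabelling by `g`
  have hpairg : ρ.map (Prod.map g g) = ρ := by
    have hcomp : (Prod.map g g) ∘ (fun ω => (T ω, T' ω))
        = fun ω => (relabel r.symm (T ω), relabel r.symm (T' ω)) := rfl
    rw [hρdef, Measure.map_map (hg.prodMap hg) hpairm, hcomp, key r.symm]
  -- second disintegration: `ρ = μ ⊗ₘ κ'`
  have hρ' : ρ = μ ⊗ₘ κ' := by
    refine Measure.ext fun s hs => ?_
    have hs' : MeasurableSet ((Prod.map g g) ⁻¹' s) := (hg.prodMap hg) hs
    rw [Measure.compProd_apply hs]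
    have hint : ∀ x, κ' x (Prod.mk x ⁻¹' s)
        = κ (f x) (Prod.mk (f x) ⁻¹' ((Prod.map g g) ⁻¹' s)) := by
      intro x
      rw [hκ'app x _ (measurable_prodMk_left hs)]
      congr 1
      ext y
      simp [Prod.map, hgf x]
    simp_rw [hint]
    have hchange : ∫⁻ x, κ (f x) (Prod.mk (f x) ⁻¹' ((Prod.map g g) ⁻¹' s)) ∂μ
        = ∫⁻ z, κ z (Prod.mk z ⁻¹' ((Prod.map g g) ⁻¹' s)) ∂(μ.map f) :=
      (lintegral_map (Kernel.measurable_kernel_prodMk_left hs') hf).symm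
    rw [hchange, hμinv r, ← Measure.compProd_apply hs', ← hρ,
      ← Measure.map_apply (hg.prodMap hg) hs, hpairg]
  -- uniqueness of disintegration
  have h1 : ∀ᵐ x ∂ρ.fst, κ x = ρ.condKernel x :=
    eq_condKernel_of_measure_eq_compProd κ (by rw [hρfst]; exact hρ)
  have h2 : ∀ᵐ x ∂ρ.fst, κ' x = ρ.condKernel x :=
    eq_condKernel_of_measure_eq_compProd κ' (by rw [hρfst]; exact hρ')
  rw [hρfst] at h1 h2
  filter_upwards [h1, h2] with R hR1 hR2
  have hκκ' : κ' R = κ R := hR2.trans hR1.symm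
  have himg : f '' A = g ⁻¹' A := congrFun (Set.image_eq_preimage_of_inverse hgf hfg) A
  show κ (f R) (f '' A) = κ R A
  rw [himg, ← hκ'app R A hA, hκκ']
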